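/- arXiv:1005.2806 — 2 statements merged into one kernel-verified Lean document; each statement's English description precedes it below -/
import Mathlib

section
/- For a vocabulary τ with |τ| ≤ θ and an ordinal α, the transitive closure E¹_{θ,α} of the relation E⁰_{θ,α} (ISO wins the game Γ_{θ,α}) is an equivalence relation on the class of τ-structures with at most ℶ_{α+1}(θ) equivalence classes. -/
universe u

open FirstOrder Cardinal

namespace ShelahGame

variable (L : FirstOrder.Language.{u, u}) (M N : Type u) [L.Structure M] [L.Structure N]

/-- `g` preserves satisfaction of atomic formulas (hence also of their negations). -/
def PreservesAtomic (g : M ≃. N) : Prop :=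
  ∀ (k : ℕ) (φ : L.BoundedFormula (Fin k) 0), φ.IsAtomic →
    ∀ (v : Fin k → M) (w : Fin k → N), (∀ i, w i ∈ g (v i)) →
      (φ.Realize v (fun i => i.elim0) ↔ φ.Realize w (fun i => i.elim0))

/-- A state of the game `Γ_{θ,α}[M,N]`. -/
structure GState (θ : Cardinal.{u}) (α : Ordinal.{u}) : Type (u + 1) where
  A1 : Set M
  A2 : Set N
  card1 : #A1 ≤ θ
  card2 : #A2 ≤ θ
  h1 : M → ℕ
  h2 : N → ℕ
  g : M ≃. N
  dom_sub : ∀ a : M, (g a).isSome → a ∈ A1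
  ran_sub : ∀ b : N, (g.symm b).isSome → b ∈ A2
  pres : PreservesAtomic L M N g
  β : Ordinal.{u}
  β_le : β ≤ α
  n : ℕ
  debt1 : ∀ a : M, (g a).isSome → h1 a < n
  debt2 : ∀ b : N, (g.symm b).isSome → h2 b < n

/-- A (legal) move of the anti-isomorphism player at state `s`. -/
inductive AISMove {θ : Cardinal.{u}} {α : Ordinal.{u}} (s : GState L M N θ α) : Type (u + 1)
  | left (β' : Ordinal.{u}) (hβ : β' < s.β) (A' : Set M) (hsub : s.A1 ⊆ A') (hcard : #A' ≤ θ) :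
      AISMove s
  | right (β' : Ordinal.{u}) (hβ : β' < s.β) (A' : Set N) (hsub : s.A2 ⊆ A') (hcard : #A' ≤ θ) :
      AISMove s

/-- Legality of a response `t` of the isomorphism player to the move `m` at state `s`. -/
def Resp {θ : Cardinal.{u}} {α : Ordinal.{u}} (s : GState L M N θ α)
    (m : AISMove L M N s) (t : GState L M N θ α) : Prop :=
  t.n = s.n + 1 ∧
  (∀ a : M, (s.g a).isSome → t.g a = s.g a) ∧
  (∀ a ∈ s.A1, t.h1 a = s.h1 a) ∧
  (∀ b ∈ s.A2, t.h2 b = s.h2 b) ∧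
  match m with
  | .left β' _ A' _ _ =>
      t.β = β' ∧ t.A1 = A' ∧
      t.A2 = s.A2 ∪ {b : N | (t.g.symm b).isSome} ∧
      (∀ a ∈ A', a ∉ s.A1 → s.n + 1 ≤ t.h1 a) ∧
      (∀ a : M, (t.g a).isSome ↔ a ∈ s.A1 ∧ s.h1 a < s.n + 1)
  | .right β' _ A' _ _ =>
      t.β = β' ∧ t.A2 = A' ∧
      t.A1 = s.A1 ∪ {a : M | (t.g a).isSome} ∧
      (∀ b ∈ A', b ∉ s.A2 → s.n + 1 ≤ t.h2 b) ∧
      (∀ b : N, (t.g.symm b).isSome ↔ b ∈ s.A2 ∧ s.h2 b < s.n + 1)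

/-- The isomorphism player has a winning strategy from state `s`
(every play of the game is finite, so this inductive definition is equivalent
to the existence of a winning strategy). -/
inductive ISOWins : {θ : Cardinal.{u}} → {α : Ordinal.{u}} → GState L M N θ α → Prop
  | intro {θ : Cardinal.{u}} {α : Ordinal.{u}} (s : GState L M N θ α)
      (resp : AISMove L M N s → GState L M N θ α)
      (hresp : ∀ m, Resp L M N s m (resp m))
      (hwin : ∀ m, ISOWins (resp m)) : ISOWins s

/-- The anti-isomorphism player has a winning strategy from state `s`. -/
inductive AISWins : {θ : Cardinal.{u}} → {α : Ordinal.{u}} → GState L M N θ α → Prop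
  | intro {θ : Cardinal.{u}} {α : Ordinal.{u}} (s : GState L M N θ α) (m : AISMove L M N s)
      (h : ∀ t, Resp L M N s m t → AISWins t) : AISWins s

/-- The isomorphism player wins the game `Γ_{θ,α}[M,N]`: the initial configuration
(empty sets, empty partial injection, ordinal `α`, move number `0`) is a legal state
and ISO has a winning strategy from it. -/
def ISOWinsGame (θ : Cardinal.{u}) (α : Ordinal.{u}) : Prop :=
  ∃ s : GState L M N θ α,
    s.A1 = ∅ ∧ s.A2 = ∅ ∧ s.g = ⊥ ∧ s.β = α ∧ s.n = 0 ∧ ISOWins L M N s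

end ShelahGame

namespace ShelahGame

/-- Iterated power function starting at `θ`: `ℶ_o(θ)`. -/
noncomputable def bethAt (θ : Cardinal.{u}) (o : Ordinal.{u}) : Cardinal.{u} :=
  Ordinal.limitRecOn o θ (fun _ x => 2 ^ x)
    (fun o _ ih => ⨆ i : {o' : Ordinal.{u} // o' < o}, ih i.1 i.2)

/-- A bundled `L`-structure. -/
structure Struc (L : FirstOrder.Language.{u, u}) : Type (u + 1) where
  carrier : Type u
  str : L.Structure carrier

/-- `E⁰_{θ,α}`: ISO has a winning strategy in `Γ_{θ,α}`. -/
def E0 (L : FirstOrder.Language.{u, u}) (θ : Cardinal.{u}) (α : Ordinal.{u})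
    (M N : Struc L) : Prop :=
  @ISOWinsGame L M.carrier N.carrier M.str N.str θ α

/-- `E¹_{θ,α}`: the closure of `E⁰_{θ,α}` to an equivalence relation. -/
def E1 (L : FirstOrder.Language.{u, u}) (θ : Cardinal.{u}) (α : Ordinal.{u}) :
    Struc L → Struc L → Prop :=
  Relation.EqvGen (E0 L θ α)

variable {L : FirstOrder.Language.{u,u}}

instance strucStructure (S : Struc L) : L.Structure S.carrier := S.str

variable (L) in
def Pt (Λ : Type u) : Type (u+1) := Σ S : Struc L, (Λ → Option S.carrier)

def Ext {Λ γ : Type u} (f f' : Λ → Option γ) : Prop := ∀ i x, f i = some x → f' i = some x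

def AtomEq {Λ : Type u} (S T : Struc L) (a : Λ → Option S.carrier) (b : Λ → Option T.carrier) : Prop :=
  (∀ i, (a i).isSome ↔ (b i).isSome) ∧
  ∀ (k : ℕ) (φ : L.BoundedFormula (Fin k) 0), φ.IsAtomic →
    ∀ (ι : Fin k → Λ) (v : Fin k → S.carrier) (w : Fin k → T.carrier),
      (∀ i, a (ι i) = some (v i)) → (∀ i, b (ι i) = some (w i)) →
      (φ.Realize v (fun i => i.elim0) ↔ φ.Realize w (fun i => i.elim0))

def R {Λ : Type u} : Ordinal.{u} → Pt L Λ → Pt L Λ → Prop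
  | β, p, q => AtomEq p.1 q.1 p.2 q.2 ∧ ∀ β' : Ordinal.{u}, β' < β →
      ((∀ a', Ext p.2 a' → ∃ b', Ext q.2 b' ∧ R β' ⟨p.1, a'⟩ ⟨q.1, b'⟩) ∧
       (∀ b', Ext q.2 b' → ∃ a', Ext p.2 a' ∧ R β' ⟨p.1, a'⟩ ⟨q.1, b'⟩))
  termination_by β _ _ => β

lemma R_iff {Λ : Type u} {β : Ordinal.{u}} {p q : Pt L Λ} :
    R β p q ↔ (AtomEq p.1 q.1 p.2 q.2 ∧ ∀ β' : Ordinal.{u}, β' < β →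
      ((∀ a', Ext p.2 a' → ∃ b', Ext q.2 b' ∧ R β' ⟨p.1, a'⟩ ⟨q.1, b'⟩) ∧
       (∀ b', Ext q.2 b' → ∃ a', Ext p.2 a' ∧ R β' ⟨p.1, a'⟩ ⟨q.1, b'⟩))) := by
  rw [R]

section Basic
variable {Λ : Type u}

lemma Ext.refl {γ : Type u} (f : Λ → Option γ) : Ext f f := fun _ _ h => h

lemma AtomEq.refl (S : Struc L) (a : Λ → Option S.carrier) : AtomEq S S a a := by
  refine ⟨fun i => Iff.rfl, fun k φ hφ ι v w hv hw => ?_⟩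
  have : v = w := funext fun i => by
    have := (hv i).symm.trans (hw i); exact Option.some_injective _ this
  rw [this]

lemma AtomEq.symm {S T : Struc L} {a : Λ → Option S.carrier} {b : Λ → Option T.carrier}
    (h : AtomEq S T a b) : AtomEq T S b a :=
  ⟨fun i => (h.1 i).symm, fun k φ hφ ι v w hv hw => (h.2 k φ hφ ι w v hw hv).symm⟩

lemma AtomEq.trans {S T U : Struc L} {a : Λ → Option S.carrier} {b : Λ → Option T.carrier}
    {c : Λ → Option U.carrier} (h1 : AtomEq S T a b) (h2 : AtomEq T U b c) :
    AtomEq S U a c := by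
  refine ⟨fun i => (h1.1 i).trans (h2.1 i), fun k φ hφ ι v w hv hw => ?_⟩
  have hsome : ∀ i, (b (ι i)).isSome := fun i => (h1.1 (ι i)).1 (by rw [hv i]; rfl)
  set u : Fin k → T.carrier := fun i => (b (ι i)).get (hsome i) with hu
  have hbu : ∀ i, b (ι i) = some (u i) := fun i => (Option.some_get (hsome i)).symm
  exact (h1.2 k φ hφ ι v u hv hbu).trans (h2.2 k φ hφ ι u w hbu hw)

lemma R.mono {β β' : Ordinal.{u}} {p q : Pt L Λ} (h : R β p q) (hle : β' ≤ β) : R β' p q := by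
  rw [R_iff] at h ⊢
  exact ⟨h.1, fun γ hγ => h.2 γ (lt_of_lt_of_le hγ hle)⟩

lemma R.refl : ∀ (β : Ordinal.{u}) (p : Pt L Λ), R β p p := by
  intro β
  induction β using Ordinal.induction with
  | _ β IH =>
    intro p
    rw [R_iff]
    refine ⟨AtomEq.refl _ _, fun β' hβ' => ⟨fun a' ha' => ⟨a', ha', IH β' hβ' _⟩,
      fun b' hb' => ⟨b', hb', IH β' hβ' _⟩⟩⟩

lemma R.symm : ∀ (β : Ordinal.{u}) {p q : Pt L Λ}, R β p q → R β q p := by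
  intro β
  induction β using Ordinal.induction with
  | _ β IH =>
    intro p q h
    rw [R_iff] at h ⊢
    refine ⟨h.1.symm, fun β' hβ' => ?_⟩
    obtain ⟨hl, hr⟩ := h.2 β' hβ'
    exact ⟨fun b' hb' => (hr b' hb').imp (fun a' ⟨ha, hR⟩ => ⟨ha, IH β' hβ' hR⟩),
      fun a' ha' => (hl a' ha').imp (fun b' ⟨hb, hR⟩ => ⟨hb, IH β' hβ' hR⟩)⟩

lemma R.trans : ∀ (β : Ordinal.{u}) {p q r : Pt L Λ}, R β p q → R β q r → R β p r := by
  intro β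
  induction β using Ordinal.induction with
  | _ β IH =>
    intro p q r h1 h2
    rw [R_iff] at h1 h2 ⊢
    refine ⟨h1.1.trans h2.1, fun β' hβ' => ?_⟩
    obtain ⟨hl1, hr1⟩ := h1.2 β' hβ'
    obtain ⟨hl2, hr2⟩ := h2.2 β' hβ'
    constructor
    · intro a' ha'
      obtain ⟨b', hb', hR1⟩ := hl1 a' ha'
      obtain ⟨c', hc', hR2⟩ := hl2 b' hb'
      exact ⟨c', hc', IH β' hβ' hR1 hR2⟩
    · intro c' hc'
      obtain ⟨b', hb', hR2⟩ := hr2 c' hc'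
      obtain ⟨a', ha', hR1⟩ := hr1 b' hb'
      exact ⟨a', ha', IH β' hβ' hR1 hR2⟩

lemma R.equivalence (β : Ordinal.{u}) : Equivalence (R (Λ := Λ) (L := L) β) :=
  ⟨R.refl β, fun h => R.symm β h, fun h1 h2 => R.trans β h1 h2⟩

end Basic



section PE
variable {Λ M N : Type u}

/-- injectivity on the domain of a partial assignment -/
def Inj {γ : Type u} (f : Λ → Option γ) : Prop :=
  ∀ i j x, f i = some x → f j = some x → i = j

noncomputable def pfun (a : Λ → Option M) (b : Λ → Option N) : M → Option N :=
  fun x => @dite _ (∃ i, a i = some x) (Classical.propDecidable _) (fun h => b h.choose)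
    (fun _ => none)

lemma pfun_eq_some {a : Λ → Option M} {b : Λ → Option N} (ha : Inj a) {x : M} {y : N} :
    pfun a b x = some y ↔ ∃ i, a i = some x ∧ b i = some y := by
  unfold pfun
  by_cases h : ∃ i, a i = some x
  · rw [dif_pos h]
    constructor
    · intro hb; exact ⟨h.choose, h.choose_spec, hb⟩
    · rintro ⟨i, hai, hbi⟩
      have : h.choose = i := ha _ _ _ h.choose_spec hai
      rw [this]; exact hbi
  · rw [dif_neg h]
    constructor
    · intro hc; exact absurd hc (by simp)
    · rintro ⟨i, hai, _⟩; exact absurd ⟨i, hai⟩ h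

noncomputable def pe (a : Λ → Option M) (b : Λ → Option N) (ha : Inj a) (hb : Inj b) :
    M ≃. N where
  toFun := pfun a b
  invFun := pfun b a
  inv := by
    intro x y
    rw [pfun_eq_some hb, pfun_eq_some ha]
    exact ⟨fun ⟨i, h1, h2⟩ => ⟨i, h2, h1⟩, fun ⟨i, h1, h2⟩ => ⟨i, h2, h1⟩⟩

variable {a : Λ → Option M} {b : Λ → Option N} (ha : Inj a) (hb : Inj b)

lemma pe_eq_some {x : M} {y : N} :
    pe a b ha hb x = some y ↔ ∃ i, a i = some x ∧ b i = some y := pfun_eq_some ha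

lemma pe_symm_eq_some {x : M} {y : N} :
    (pe a b ha hb).symm y = some x ↔ ∃ i, a i = some x ∧ b i = some y := by
  show pfun b a y = some x ↔ _
  rw [pfun_eq_some hb]
  exact ⟨fun ⟨i, h1, h2⟩ => ⟨i, h2, h1⟩, fun ⟨i, h1, h2⟩ => ⟨i, h2, h1⟩⟩

lemma pe_isSome (hd : ∀ i, (a i).isSome ↔ (b i).isSome) {x : M} :
    (pe a b ha hb x).isSome ↔ ∃ i, a i = some x := by
  rw [Option.isSome_iff_exists]
  constructor
  · rintro ⟨y, hy⟩
    obtain ⟨i, h1, _⟩ := (pe_eq_some ha hb).1 hy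
    exact ⟨i, h1⟩
  · rintro ⟨i, hi⟩
    have hbs : (b i).isSome := (hd i).1 (by rw [hi]; rfl)
    obtain ⟨y, hy⟩ := Option.isSome_iff_exists.1 hbs
    exact ⟨y, (pe_eq_some ha hb).2 ⟨i, hi, hy⟩⟩

lemma pe_symm_isSome (hd : ∀ i, (a i).isSome ↔ (b i).isSome) {y : N} :
    ((pe a b ha hb).symm y).isSome ↔ ∃ i, b i = some y := by
  rw [Option.isSome_iff_exists]
  constructor
  · rintro ⟨x, hx⟩
    obtain ⟨i, _, h2⟩ := (pe_symm_eq_some ha hb).1 hx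
    exact ⟨i, h2⟩
  · rintro ⟨i, hi⟩
    have has : (a i).isSome := (hd i).2 (by rw [hi]; rfl)
    obtain ⟨x, hx⟩ := Option.isSome_iff_exists.1 has
    exact ⟨x, (pe_symm_eq_some ha hb).2 ⟨i, hx, hi⟩⟩

end PE

lemma bethAt_zero (θ : Cardinal.{u}) : bethAt θ 0 = θ := Ordinal.limitRecOn_zero _ _ _

lemma bethAt_succ (θ : Cardinal.{u}) (o : Ordinal.{u}) :
    bethAt θ (o + 1) = 2 ^ bethAt θ o := by
  rw [bethAt, Ordinal.add_one_eq_succ, Ordinal.limitRecOn_succ]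
  rfl

lemma bethAt_limit (θ : Cardinal.{u}) {o : Ordinal.{u}} (h : Order.IsSuccLimit o) :
    bethAt θ o = ⨆ i : {o' : Ordinal.{u} // o' < o}, bethAt θ i.1 :=
  Ordinal.limitRecOn_limit _ _ _ _ h

lemma le_bethAt_self (θ : Cardinal.{u}) : ∀ o : Ordinal.{u}, θ ≤ bethAt θ o := by
  intro o
  induction o using Ordinal.limitRecOn with
  | zero => rw [bethAt_zero]
  | add_one o ih =>
      rw [bethAt_succ]
      exact le_trans ih (le_of_lt (Cardinal.cantor _))
  | limit o ho ih =>
      rw [bethAt_limit θ ho]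
      have h0 : (0 : Ordinal) < o := ho.pos
      haveI : Small.{u} {o' : Ordinal.{u} // o' < o} := Ordinal.small_Iio o
      have := le_ciSup (Cardinal.bddAbove_range (fun i : {o' : Ordinal.{u} // o' < o} => bethAt θ i.1))
        (⟨0, h0⟩ : {o' : Ordinal // o' < o})
      rw [bethAt_zero θ] at this
      exact this

lemma bethAt_mono (θ : Cardinal.{u}) : Monotone (bethAt θ) := by
  intro o₁ o₂ h
  induction o₂ using Ordinal.limitRecOn with
  | zero =>
      rw [nonpos_iff_eq_zero.1 h]
  | add_one o ih =>
      rcases ((Order.le_succ_iff_eq_or_le).1 h) with h1 | h1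
      · rw [h1, Ordinal.add_one_eq_succ]
      · rw [bethAt_succ]
        exact le_trans (ih h1) (le_of_lt (Cardinal.cantor _))
  | limit o ho ih =>
      rcases eq_or_lt_of_le h with h1 | h1
      · rw [h1]
      · rw [bethAt_limit θ ho]
        haveI : Small.{u} {o' : Ordinal.{u} // o' < o} := Ordinal.small_Iio o
        exact le_trans (ih o₁ h1 le_rfl)
          (le_ciSup (Cardinal.bddAbove_range (fun i : {o' : Ordinal.{u} // o' < o} => bethAt θ i.1))
            (⟨o₁, h1⟩ : {o' : Ordinal // o' < o}))

lemma aleph0_le_bethAt {θ : Cardinal.{u}} (hθ : ℵ₀ ≤ θ) (o : Ordinal.{u}) : ℵ₀ ≤ bethAt θ o :=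
  le_trans hθ (le_bethAt_self θ o)

lemma card_le_bethAt {θ : Cardinal.{u}} (hθ : ℵ₀ ≤ θ) : ∀ o : Ordinal.{u}, o.card ≤ bethAt θ o := by
  intro o
  induction o using Ordinal.induction with
  | _ o IH =>
    rcases Ordinal.zero_or_succ_or_isSuccLimit o with h | ⟨a, h⟩ | h
    · simp [h, bethAt_zero]
    · subst h
      rw [← Ordinal.add_one_eq_succ, bethAt_succ]
      rw [Ordinal.add_one_eq_succ, Ordinal.card_succ]
      have h1 : a.card ≤ bethAt θ a := IH a (Order.lt_succ a)
      have h2 : a.card + 1 ≤ bethAt θ a + 1 := by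
        exact add_le_add_left h1 1
      have h3 : bethAt θ a + 1 = bethAt θ a := by
        have := aleph0_le_bethAt hθ a
        exact Cardinal.add_one_of_aleph0_le this
      calc a.card + 1 ≤ bethAt θ a + 1 := h2
        _ = bethAt θ a := h3
        _ ≤ 2 ^ bethAt θ a := le_of_lt (Cardinal.cantor _)
    · -- limit case
      rw [bethAt_limit θ h]
      by_contra hcon
      push_neg at hcon
      set c := ⨆ i : {o' : Ordinal.{u} // o' < o}, bethAt θ i.1 with hc
      have hlt : c < o.card := hcon
      -- consider c.ord ≤ o
      have hcord : c.ord ≤ o := by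
        rw [Cardinal.ord_le]
        exact le_of_lt hlt
      rcases lt_or_eq_of_le hcord with h1 | h1
      · -- β := c.ord < o, then bethAt θ (c.ord + 1) ≤ c but bethAt θ (c.ord+1) ≥ c⁺ > c
        have hlim : c.ord + 1 < o := h.succ_lt h1
        haveI : Small.{u} {o' : Ordinal.{u} // o' < o} := Ordinal.small_Iio o
        have hle : bethAt θ (c.ord + 1) ≤ c :=
          le_ciSup (Cardinal.bddAbove_range (fun i : {o' : Ordinal.{u} // o' < o} => bethAt θ i.1))
            (⟨c.ord + 1, hlim⟩ : {o' : Ordinal // o' < o})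
        have hge : c < bethAt θ (c.ord + 1) := by
          rw [bethAt_succ]
          calc c = (c.ord).card := (Cardinal.card_ord c).symm
            _ ≤ bethAt θ c.ord := IH _ h1
            _ < 2 ^ bethAt θ c.ord := Cardinal.cantor _
        exact absurd hle (not_le.2 hge)
      · -- c.ord = o, so o.card = c, contradiction with c < o.card
        have : o.card = c := by rw [← h1, Cardinal.card_ord]
        rw [this] at hlt
        exact absurd hlt (lt_irrefl c)



section Counting

variable {Λ : Type u} {θ : Cardinal.{u}}

variable (L Λ) in
/-- atomic formulas together with an assignment of indices to their free variables -/
def AtomData : Type u := Σ k : ℕ, L.BoundedFormula (Fin k) 0 × (Fin k → Λ)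

variable (L Λ) in
noncomputable def Qt (β : Ordinal.{u}) : Type (u+1) := Quot (R (L := L) (Λ := Λ) β)

def domSet (p : Pt L Λ) : Set Λ := {i | (p.2 i).isSome}

def diagSet (p : Pt L Λ) : Set (AtomData L Λ) :=
  {d | d.2.1.IsAtomic ∧ ∃ v : Fin d.1 → p.1.carrier,
    (∀ i, p.2 (d.2.2 i) = some (v i)) ∧ d.2.1.Realize v (fun i => i.elim0)}

variable (L Λ) in
def extSet (β' : Ordinal.{u}) (p : Pt L Λ) : Set (Qt L Λ β') :=
  {q | ∃ a', Ext p.2 a' ∧ q = Quot.mk _ ⟨p.1, a'⟩}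

lemma atomEq_iff_data {p q : Pt L Λ} :
    AtomEq p.1 q.1 p.2 q.2 ↔ (domSet p = domSet q ∧ diagSet p = diagSet q) := by
  constructor
  · intro h
    refine ⟨Set.ext fun i => h.1 i, Set.ext fun d => ?_⟩
    obtain ⟨k, φ, ι⟩ := d
    simp only [diagSet, Set.mem_setOf_eq]
    constructor
    · rintro ⟨hφ, v, hv, hreal⟩
      refine ⟨hφ, ?_⟩
      have hsome : ∀ i, (q.2 (ι i)).isSome := fun i => (h.1 (ι i)).1 (by rw [hv i]; rfl)
      refine ⟨fun i => (q.2 (ι i)).get (hsome i), fun i => (Option.some_get (hsome i)).symm, ?_⟩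
      exact (h.2 k φ hφ ι v _ hv (fun i => (Option.some_get (hsome i)).symm)).1 hreal
    · rintro ⟨hφ, w, hw, hreal⟩
      refine ⟨hφ, ?_⟩
      have hsome : ∀ i, (p.2 (ι i)).isSome := fun i => (h.1 (ι i)).2 (by rw [hw i]; rfl)
      refine ⟨fun i => (p.2 (ι i)).get (hsome i), fun i => (Option.some_get (hsome i)).symm, ?_⟩
      exact (h.2 k φ hφ ι _ w (fun i => (Option.some_get (hsome i)).symm) hw).2 hreal
  · rintro ⟨hdom, hdiag⟩
    constructor
    · intro i
      exact ⟨fun hi => (Set.ext_iff.1 hdom i).1 hi, fun hi => (Set.ext_iff.1 hdom i).2 hi⟩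
    · intro k φ hφ ι v w hv hw
      constructor
      · intro hreal
        have : (⟨k, φ, ι⟩ : AtomData L Λ) ∈ diagSet p := ⟨hφ, v, hv, hreal⟩
        rw [hdiag] at this
        obtain ⟨-, w', hw', hreal'⟩ := this
        have : w = w' := funext fun i => Option.some_injective _ ((hw i).symm.trans (hw' i))
        rw [this]; exact hreal'
      · intro hreal
        have : (⟨k, φ, ι⟩ : AtomData L Λ) ∈ diagSet q := ⟨hφ, w, hw, hreal⟩
        rw [← hdiag] at this
        obtain ⟨-, v', hv', hreal'⟩ := this
        have : v = v' := funext fun i => Option.some_injective _ ((hv i).symm.trans (hv' i))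
        rw [this]; exact hreal'

lemma extSet_eq_of_R {β β' : Ordinal.{u}} (hβ' : β' < β) {p q : Pt L Λ} (h : R β p q) :
    extSet L Λ β' p = extSet L Λ β' q := by
  rw [R_iff] at h
  obtain ⟨hl, hr⟩ := h.2 β' hβ'
  ext c
  constructor
  · rintro ⟨a', ha', rfl⟩
    obtain ⟨b', hb', hR⟩ := hl a' ha'
    exact ⟨b', hb', (Quot.sound hR)⟩
  · rintro ⟨b', hb', rfl⟩
    obtain ⟨a', ha', hR⟩ := hr b' hb'
    exact ⟨a', ha', (Quot.sound hR).symm⟩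

lemma r_of_data_eq {β : Ordinal.{u}} {p q : Pt L Λ}
    (h1 : domSet p = domSet q) (h2 : diagSet p = diagSet q)
    (h3 : ∀ β' : Ordinal.{u}, β' < β → extSet L Λ β' p = extSet L Λ β' q) : R β p q := by
  rw [R_iff]
  refine ⟨atomEq_iff_data.2 ⟨h1, h2⟩, fun β' hβ' => ⟨?_, ?_⟩⟩
  · intro a' ha'
    have hmem : (Quot.mk _ ⟨p.1, a'⟩ : Qt L Λ β') ∈ extSet L Λ β' q := by
      rw [← h3 β' hβ']; exact ⟨a', ha', rfl⟩
    obtain ⟨b', hb', heq⟩ := hmem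
    refine ⟨b', hb', ?_⟩
    exact ((R.equivalence β').eqvGen_iff).1 (Quot.eq.1 heq)
  · intro b' hb'
    have hmem : (Quot.mk _ ⟨q.1, b'⟩ : Qt L Λ β') ∈ extSet L Λ β' p := by
      rw [h3 β' hβ']; exact ⟨b', hb', rfl⟩
    obtain ⟨a', ha', heq⟩ := hmem
    refine ⟨a', ha', ?_⟩
    exact R.symm β' (((R.equivalence β').eqvGen_iff).1 (Quot.eq.1 heq))

variable (L Λ) in
noncomputable def Fdata (β : Ordinal.{u}) :
    Qt L Λ β → Set Λ × Set (AtomData L Λ) × (∀ β' : {γ : Ordinal.{u} // γ < β}, Set (Qt L Λ β'.1)) :=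
  Quot.lift (fun p => (domSet p, diagSet p, fun β' => extSet L Λ β'.1 p)) (by
    intro p q h
    rw [R_iff] at h
    have hAE := atomEq_iff_data.1 h.1
    refine Prod.ext hAE.1 (Prod.ext hAE.2 ?_)
    funext β'
    exact extSet_eq_of_R β'.2 (by rw [R_iff]; exact h))

lemma Fdata_injective (β : Ordinal.{u}) : Function.Injective (Fdata L Λ β) := by
  intro x y
  refine Quot.induction_on₂ x y ?_
  intro p q h
  simp only [Fdata] at h
  have h1 := congrArg Prod.fst h
  have h23 := congrArg Prod.snd h
  have h2 := congrArg Prod.fst h23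
  have h3 := congrArg Prod.snd h23
  simp only at h1 h2 h3
  refine Quot.sound (r_of_data_eq h1 h2 ?_)
  intro β' hβ'
  exact congrFun h3 ⟨β', hβ'⟩

lemma mk_atomData_le (hθ : ℵ₀ ≤ θ) (hL : L.card ≤ θ) (hΛ : #Λ ≤ θ) :
    #(AtomData L Λ) ≤ θ := by
  have hBF : ∀ k : ℕ, #(L.BoundedFormula (Fin k) 0) ≤ θ := by
    intro k
    have h1 : #(L.BoundedFormula (Fin k) 0) ≤ #(Σ n, L.BoundedFormula (Fin k) n) :=
      Cardinal.mk_le_of_injective (f := fun φ => ⟨0, φ⟩) (fun a b hab => by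
        simpa using hab)
    refine h1.trans ((FirstOrder.Language.BoundedFormula.card_le).trans ?_)
    simp only [Cardinal.mk_fin, Cardinal.lift_natCast, Cardinal.lift_id, Cardinal.lift_uzero]
    refine max_le hθ ((add_le_add (le_trans (le_of_lt (Cardinal.nat_lt_aleph0 k)) hθ) hL).trans ?_)
    rw [Cardinal.add_eq_self hθ]
  have hAs : ∀ k : ℕ, #(L.BoundedFormula (Fin k) 0 × (Fin k → Λ)) ≤ θ := by
    intro k
    rw [Cardinal.mk_prod, Cardinal.lift_id, Cardinal.lift_id]
    have h2 : #(Fin k → Λ) ≤ θ := by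
      rw [Cardinal.mk_pi]
      refine le_trans (Cardinal.prod_le_prod _ (fun _ => θ) (fun i => hΛ)) ?_
      rw [Cardinal.prod_const, Cardinal.mk_fin]
      simp only [Cardinal.lift_id, Cardinal.lift_uzero, Cardinal.lift_natCast]
      exact Cardinal.power_nat_le hθ
    calc #(L.BoundedFormula (Fin k) 0) * #(Fin k → Λ) ≤ θ * θ :=
          mul_le_mul' (hBF k) h2
      _ = θ := Cardinal.mul_eq_self hθ
  rw [AtomData, Cardinal.mk_sigma]
  refine le_trans (Cardinal.sum_le_sum _ (fun _ => θ) (fun k => hAs k)) ?_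
  rw [Cardinal.sum_const, Cardinal.mk_nat]
  simp only [Cardinal.lift_id, Cardinal.lift_uzero, Cardinal.lift_aleph0]
  rw [mul_comm]
  exact le_of_eq (Cardinal.mul_aleph0_eq hθ)

lemma mk_Qt_le (hθ : ℵ₀ ≤ θ) (hL : L.card ≤ θ) (hΛ : #Λ ≤ θ) :
    ∀ β : Ordinal.{u}, #(Qt L Λ β) ≤ Cardinal.lift.{u+1} (bethAt θ (β + 1)) := by
  intro β
  induction β using Ordinal.induction with
  | _ β IH =>
    have hX : ℵ₀ ≤ bethAt θ β := aleph0_le_bethAt hθ β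
    have hXsucc : ℵ₀ ≤ bethAt θ (β + 1) := aleph0_le_bethAt hθ (β + 1)
    have hinj := Cardinal.mk_le_of_injective (Fdata_injective (L := L) (Λ := Λ) β)
    refine hinj.trans ?_
    have hmk : #(Set Λ × Set (AtomData L Λ) × (∀ β' : {γ : Ordinal.{u} // γ < β}, Set (Qt L Λ β'.1)))
        = Cardinal.lift.{u+1} #(Set Λ) * (Cardinal.lift.{u+1} #(Set (AtomData L Λ)) *
            #(∀ β' : {γ : Ordinal.{u} // γ < β}, Set (Qt L Λ β'.1))) := by
      rw [Cardinal.mk_prod, Cardinal.mk_prod, Cardinal.lift_mul,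
        Cardinal.lift_id'.{u, u+1}, Cardinal.lift_lift, Cardinal.lift_id'.{u, u+1}]
    rw [hmk]
    have hset : #(Set Λ) ≤ 2 ^ θ := by
      rw [Cardinal.mk_set]
      exact Cardinal.power_le_power_left (by norm_num) hΛ
    have hsetA : #(Set (AtomData L Λ)) ≤ 2 ^ θ := by
      rw [Cardinal.mk_set]
      exact Cardinal.power_le_power_left (by norm_num) (mk_atomData_le hθ hL hΛ)
    have htwo : (2 : Cardinal.{u}) ^ θ ≤ bethAt θ (β + 1) := by
      rw [bethAt_succ]
      exact Cardinal.power_le_power_left (by norm_num) (le_bethAt_self θ β)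
    have hpi : #(∀ β' : {γ : Ordinal.{u} // γ < β}, Set (Qt L Λ β'.1)) ≤
        Cardinal.lift.{u+1} (bethAt θ (β + 1)) := by
      rw [Cardinal.mk_pi]
      have hfac : ∀ β' : {γ : Ordinal.{u} // γ < β},
          #(Set (Qt L Λ β'.1)) ≤ Cardinal.lift.{u+1} (bethAt θ (β + 1)) := by
        intro β'
        rw [Cardinal.mk_set]
        calc (2 : Cardinal.{u+1}) ^ #(Qt L Λ β'.1)
            ≤ 2 ^ Cardinal.lift.{u+1} (bethAt θ (β'.1 + 1)) :=
              Cardinal.power_le_power_left (by norm_num) (IH β'.1 β'.2)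
          _ = Cardinal.lift.{u+1} (2 ^ bethAt θ (β'.1 + 1)) := by
              rw [Cardinal.lift_two_power]
          _ = Cardinal.lift.{u+1} (bethAt θ (β'.1 + 1 + 1)) := by rw [bethAt_succ θ (β'.1 + 1)]
          _ ≤ Cardinal.lift.{u+1} (bethAt θ (β + 1)) := by
              refine Cardinal.lift_le.2 (bethAt_mono θ ?_)
              have : β'.1 + 1 ≤ β := by
                rw [Ordinal.add_one_eq_succ, Order.succ_le_iff]; exact β'.2
              exact add_le_add_left this 1
      refine le_trans (Cardinal.prod_le_prod _ _ hfac) ?_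
      rw [Cardinal.prod_const']
      have hmkI : #({γ : Ordinal.{u} // γ < β}) = Cardinal.lift.{u+1} β.card :=
        Ordinal.mk_Iio_ordinal β
      rw [hmkI, ← Cardinal.lift_power]
      refine Cardinal.lift_le.2 ?_
      rw [bethAt_succ, ← Cardinal.power_mul]
      refine Cardinal.power_le_power_left (by norm_num) ?_
      calc bethAt θ β * β.card ≤ bethAt θ β * bethAt θ β :=
            mul_le_mul' le_rfl ((card_le_bethAt hθ β))
        _ = bethAt θ β := Cardinal.mul_eq_self hX
    have hC : ℵ₀ ≤ Cardinal.lift.{u+1} (bethAt θ (β+1)) := by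
      rw [← Cardinal.lift_aleph0.{u+1, u}]
      exact Cardinal.lift_le.2 hXsucc
    calc Cardinal.lift.{u+1} #(Set Λ) *
          (Cardinal.lift.{u+1} #(Set (AtomData L Λ)) *
            #(∀ β' : {γ : Ordinal.{u} // γ < β}, Set (Qt L Λ β'.1)))
        ≤ Cardinal.lift.{u+1} (bethAt θ (β+1)) *
          (Cardinal.lift.{u+1} (bethAt θ (β+1)) * Cardinal.lift.{u+1} (bethAt θ (β+1))) :=
          mul_le_mul' (Cardinal.lift_le.2 (hset.trans htwo))
            (mul_le_mul' (Cardinal.lift_le.2 (hsetA.trans htwo)) hpi)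
      _ = Cardinal.lift.{u+1} (bethAt θ (β+1)) := by
          rw [Cardinal.mul_eq_self hC, Cardinal.mul_eq_self hC]

end Counting

section Complete

variable {θ : Cardinal.{u}} {α : Ordinal.{u}}

/-- index type for assignments -/
abbrev Idx (θ : Cardinal.{u}) : Type u := Quotient.out θ × ℕ

lemma mk_idx {θ : Cardinal.{u}} (hθ : ℵ₀ ≤ θ) : #(Idx θ) = θ := by
  rw [Idx, Cardinal.mk_prod, Cardinal.mk_out, Cardinal.mk_nat]
  simp only [Cardinal.lift_id, Cardinal.lift_uzero, Cardinal.lift_aleph0]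
  exact Cardinal.mul_aleph0_eq hθ

variable {Λ : Type u}

lemma eqFormula_atomic : ((FirstOrder.Language.Term.var (Sum.inl 0)).bdEqual (FirstOrder.Language.Term.var (Sum.inl 1)) :
    L.BoundedFormula (Fin 2) 0).IsAtomic := FirstOrder.Language.BoundedFormula.IsAtomic.equal _ _

lemma inj_right_of_atomEq {S T : Struc L} {a : Λ → Option S.carrier} {b : Λ → Option T.carrier}
    (h : AtomEq S T a b) (ha : Inj a) : Inj b := by
  intro i j y hi hj
  have hsi : (a i).isSome := (h.1 i).2 (by rw [hi]; rfl)
  have hsj : (a j).isSome := (h.1 j).2 (by rw [hj]; rfl)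
  set xi := (a i).get hsi with hxi
  set xj := (a j).get hsj with hxj
  have hai : a i = some xi := (Option.some_get hsi).symm
  have haj : a j = some xj := (Option.some_get hsj).symm
  have key := h.2 2 ((FirstOrder.Language.Term.var (Sum.inl 0)).bdEqual (FirstOrder.Language.Term.var (Sum.inl 1))) eqFormula_atomic
    ![i, j] ![xi, xj] ![y, y] (fun ii => by fin_cases ii <;> simpa [hai, haj])
    (fun ii => by fin_cases ii <;> simpa [hi, hj])
  have hw : ((FirstOrder.Language.Term.var (Sum.inl 0)).bdEqual (FirstOrder.Language.Term.var (Sum.inl 1)) :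
      L.BoundedFormula (Fin 2) 0).Realize (M := T.carrier) ![y, y] (fun i => i.elim0) := by
    simp [FirstOrder.Language.BoundedFormula.realize_bdEqual]
  have hv := key.2 hw
  simp [FirstOrder.Language.BoundedFormula.realize_bdEqual] at hv
  have : a j = some xi := by rw [haj, hv]
  exact ha i j xi hai this

lemma inj_left_of_atomEq {S T : Struc L} {a : Λ → Option S.carrier} {b : Λ → Option T.carrier}
    (h : AtomEq S T a b) (hb : Inj b) : Inj a :=
  inj_right_of_atomEq h.symm hb

variable {M N : Type u} [iM : L.Structure M] [iN : L.Structure N]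

lemma pres_pe {a : Λ → Option M} {b : Λ → Option N} (ha : Inj a) (hb : Inj b)
    (hAE : AtomEq ⟨M, iM⟩ ⟨N, iN⟩ a b) : PreservesAtomic L M N (pe a b ha hb) := by
  intro k φ hφ v w hw
  have hmem : ∀ i, pe a b ha hb (v i) = some (w i) := fun i => (hw i)
  choose ι hι1 hι2 using fun i => (pe_eq_some ha hb).1 (hmem i)
  exact hAE.2 k φ hφ ι v w hι1 hι2

/-- The invariant maintained by ISO between rounds. -/
structure GInv (s : GState L M N θ α) (a : Idx θ → Option M) (b : Idx θ → Option N) : Prop where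
  hR : R s.β (⟨⟨M, iM⟩, a⟩ : Pt L (Idx θ)) ⟨⟨N, iN⟩, b⟩
  ha : Inj a
  hb : Inj b
  hg : ∀ x y, s.g x = some y ↔ ∃ i, a i = some x ∧ b i = some y
  hranA1 : ∀ i x, a i = some x → x ∈ s.A1
  hranA2 : ∀ i y, b i = some y → y ∈ s.A2
  hA1h : ∀ x ∈ s.A1, s.h1 x ≤ s.n
  hA2h : ∀ y ∈ s.A2, s.h2 y ≤ s.n
  hfresh : ∀ p : Idx θ, s.n ≤ p.2 → a p = none

namespace GInv

variable {s : GState L M N θ α} {a : Idx θ → Option M} {b : Idx θ → Option N}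

lemma hdom (inv : GInv s a b) : ∀ i, (a i).isSome ↔ (b i).isSome :=
  (R_iff.1 inv.hR).1.1

lemma hAE (inv : GInv s a b) : AtomEq (⟨M, iM⟩ : Struc L) ⟨N, iN⟩ a b :=
  (R_iff.1 inv.hR).1

lemma hfresh' (inv : GInv s a b) : ∀ p : Idx θ, s.n ≤ p.2 → b p = none := by
  intro p hp
  have := inv.hfresh p hp
  rcases hb' : b p with _ | y
  · rfl
  · exfalso
    have : (a p).isSome := (inv.hdom p).2 (by rw [hb']; rfl)
    rw [inv.hfresh p hp] at this
    exact (Bool.false_ne_true this)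

lemma hgsymm (inv : GInv s a b) :
    ∀ x y, s.g.symm y = some x ↔ ∃ i, a i = some x ∧ b i = some y := by
  intro x y
  have h := PEquiv.mem_iff_mem s.g (a := x) (b := y)
  rw [Option.mem_def, Option.mem_def] at h
  rw [h]
  exact inv.hg x y

end GInv

end Complete

section Steps

variable {θ : Cardinal.{u}} {α : Ordinal.{u}}
variable {M N : Type u} [iM : L.Structure M] [iN : L.Structure N]
variable {s : GState L M N θ α} {a : Idx θ → Option M} {b : Idx θ → Option N}

set_option maxHeartbeats 1000000 in
lemma step_left (hθ : ℵ₀ ≤ θ) (inv : GInv s a b)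
    (β' : Ordinal.{u}) (hβ : β' < s.β) (A' : Set M) (hsub : s.A1 ⊆ A') (hcard : #A' ≤ θ) :
    ∃ t : GState L M N θ α, Resp L M N s (.left β' hβ A' hsub hcard) t ∧
      t.β < s.β ∧ ∃ a' b', GInv t a' b' := by
  classical
  -- the pending elements on the left
  set P : Set M := {x | x ∈ s.A1 ∧ ∀ i, a i ≠ some x} with hP
  have hPsub : P ⊆ s.A1 := fun x hx => hx.1
  have hPcard : #P ≤ #(Quotient.out θ) := by
    refine le_trans (Cardinal.mk_le_mk_of_subset hPsub) (le_trans s.card1 ?_)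
    rw [Cardinal.mk_out]
  obtain ⟨e⟩ := (Cardinal.le_def _ _).1 hPcard
  -- the extended assignment
  set a' : Idx θ → Option M :=
    fun i => if h : ∃ p : P, ((e p, s.n) : Idx θ) = i then some (h.choose : M) else a i with ha'
  have hF1 : Ext a a' := by
    intro i x hi
    simp only [ha']
    split
    · rename_i h
      exfalso
      have : a i = none := inv.hfresh i (by rw [← h.choose_spec])
      rw [this] at hi; exact nomatch hi
    · exact hi
  have hF3 : ∀ i x, a' i = some x → x ∈ s.A1 := by
    intro i x hi
    simp only [ha'] at hi
    by_cases h : ∃ p : P, ((e p, s.n) : Idx θ) = i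
    · rw [dif_pos h] at hi
      have : (h.choose : M) = x := Option.some_injective _ hi
      exact this ▸ hPsub h.choose.2
    · rw [dif_neg h] at hi
      exact inv.hranA1 i x hi
  have hF2 : ∀ x ∈ s.A1, ∃ i, a' i = some x := by
    intro x hx
    by_cases hex : ∃ i, a i = some x
    · obtain ⟨i, hi⟩ := hex
      exact ⟨i, hF1 i x hi⟩
    · push_neg at hex
      have hxP : x ∈ P := ⟨hx, hex⟩
      refine ⟨(e ⟨x, hxP⟩, s.n), ?_⟩
      simp only [ha']
      have h : ∃ p : P, ((e p, s.n) : Idx θ) = ((e ⟨x, hxP⟩, s.n) : Idx θ) := ⟨⟨x, hxP⟩, rfl⟩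
      rw [dif_pos h]
      have h1 : e h.choose = e ⟨x, hxP⟩ := (Prod.ext_iff.1 h.choose_spec).1
      have h2 : h.choose = ⟨x, hxP⟩ := e.injective h1
      rw [h2]
  have hF4 : Inj a' := by
    intro i j x hi hj
    simp only [ha'] at hi hj
    by_cases h1 : ∃ p : P, ((e p, s.n) : Idx θ) = i
    · rw [dif_pos h1] at hi
      by_cases h2 : ∃ p : P, ((e p, s.n) : Idx θ) = j
      · rw [dif_pos h2] at hj
        have e1 : (h1.choose : M) = x := Option.some_injective _ hi
        have e2 : (h2.choose : M) = x := Option.some_injective _ hj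
        have : h1.choose = h2.choose := Subtype.ext (e1.trans e2.symm)
        rw [← h1.choose_spec, ← h2.choose_spec, this]
      · rw [dif_neg h2] at hj
        exfalso
        have e1 : (h1.choose : M) = x := Option.some_injective _ hi
        exact h1.choose.2.2 j (e1 ▸ hj)
    · rw [dif_neg h1] at hi
      by_cases h2 : ∃ p : P, ((e p, s.n) : Idx θ) = j
      · rw [dif_pos h2] at hj
        exfalso
        have e2 : (h2.choose : M) = x := Option.some_injective _ hj
        exact h2.choose.2.2 i (e2 ▸ hi)
      · rw [dif_neg h2] at hj
        exact inv.ha i j x hi hj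
  have hF5 : ∀ p : Idx θ, s.n + 1 ≤ p.2 → a' p = none := by
    intro p hp
    simp only [ha']
    split
    · rename_i h
      exfalso
      have : s.n = p.2 := congrArg Prod.snd h.choose_spec
      omega
    · exact inv.hfresh p (by omega)
  -- apply the extension property of R
  obtain ⟨b', hextb, hR'⟩ := ((R_iff.1 inv.hR).2 β' hβ).1 a' hF1
  have hAE' : AtomEq (⟨M, iM⟩ : Struc L) ⟨N, iN⟩ a' b' := (R_iff.1 hR').1
  have hd' : ∀ i, (a' i).isSome ↔ (b' i).isSome := hAE'.1
  have hb'inj : Inj b' := inj_right_of_atomEq hAE' hF4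
  set g' : M ≃. N := pe a' b' hF4 hb'inj with hg'
  -- the new state
  have hcard2 : #(s.A2 ∪ {y : N | (g'.symm y).isSome} : Set N) ≤ θ := by
    refine le_trans (Cardinal.mk_union_le _ _) ?_
    have hS : #({y : N | (g'.symm y).isSome} : Set N) ≤ θ := by
      have hinj : Function.Injective
          (fun y : ({y : N | (g'.symm y).isSome} : Set N) =>
            (((pe_symm_isSome hF4 hb'inj hd').1 y.2).choose : Idx θ)) := by
        intro y1 y2 h12
        dsimp only at h12
        have s1 := ((pe_symm_isSome hF4 hb'inj hd').1 y1.2).choose_spec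
        have s2 := ((pe_symm_isSome hF4 hb'inj hd').1 y2.2).choose_spec
        rw [h12] at s1
        exact Subtype.ext (Option.some_injective _ (s1.symm.trans s2))
      refine le_trans (Cardinal.mk_le_of_injective hinj) ?_
      rw [mk_idx hθ]
    calc #(s.A2 : Set N) + #({y : N | (g'.symm y).isSome} : Set N) ≤ θ + θ :=
          add_le_add s.card2 hS
      _ = θ := Cardinal.add_eq_self hθ
  refine ⟨⟨A', s.A2 ∪ {y : N | (g'.symm y).isSome}, hcard, hcard2,
    (fun x => if x ∈ s.A1 then s.h1 x else if x ∈ A' then s.n + 1 else 0),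
    (fun y => if y ∈ s.A2 then s.h2 y else 0), g', ?_, ?_, ?_, β', le_of_lt (lt_of_lt_of_le hβ s.β_le),
    s.n + 1, ?_, ?_⟩, ⟨rfl, ?_, ?_, ?_, rfl, rfl, rfl, ?_, ?_⟩, hβ, a', b', ?_⟩
  · -- dom_sub
    intro x hx
    obtain ⟨i, hi⟩ := (pe_isSome hF4 hb'inj hd').1 hx
    exact hsub (hF3 i x hi)
  · -- ran_sub
    intro y hy
    exact Or.inr hy
  · -- pres
    exact pres_pe hF4 hb'inj hAE'
  · -- debt1
    intro x hx
    obtain ⟨i, hi⟩ := (pe_isSome hF4 hb'inj hd').1 hx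
    have hxA1 : x ∈ s.A1 := hF3 i x hi
    simp only [if_pos hxA1]
    exact Nat.lt_succ_of_le (inv.hA1h x hxA1)
  · -- debt2
    intro y hy
    by_cases hyA2 : y ∈ s.A2
    · simp only [if_pos hyA2]
      exact Nat.lt_succ_of_le (inv.hA2h y hyA2)
    · simp only [if_neg hyA2]
      exact Nat.succ_pos _
  · -- g extension
    intro x hx
    obtain ⟨y, hy⟩ := Option.isSome_iff_exists.1 hx
    obtain ⟨i, hai, hbi⟩ := (inv.hg x y).1 hy
    show g' x = s.g x
    rw [hy]
    exact (pe_eq_some hF4 hb'inj).2 ⟨i, hF1 i x hai, hextb i y hbi⟩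
  · -- h1 preserved
    intro x hx
    simp only [if_pos hx]
  · -- h2 preserved
    intro y hy
    simp only [if_pos hy]
  · -- new elements have debt
    intro x hxA' hxnot
    simp only [if_neg hxnot, if_pos hxA']
    exact le_rfl
  · -- the domain condition
    intro x
    constructor
    · intro hx
      obtain ⟨i, hi⟩ := (pe_isSome hF4 hb'inj hd').1 hx
      exact ⟨hF3 i x hi, Nat.lt_succ_of_le (inv.hA1h x (hF3 i x hi))⟩
    · rintro ⟨hxA1, -⟩
      obtain ⟨i, hi⟩ := hF2 x hxA1
      exact (pe_isSome hF4 hb'inj hd').2 ⟨i, hi⟩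
  · -- the invariant
    refine ⟨hR', hF4, hb'inj, fun x y => pe_eq_some hF4 hb'inj, ?_, ?_, ?_, ?_, hF5⟩
    · intro i x hi
      exact hsub (hF3 i x hi)
    · intro i y hi
      exact Or.inr ((pe_symm_isSome hF4 hb'inj hd').2 ⟨i, hi⟩)
    · intro x hx
      by_cases hxA1 : x ∈ s.A1
      · simp only [if_pos hxA1]
        exact Nat.le_succ_of_le (inv.hA1h x hxA1)
      · simp only [if_neg hxA1, if_pos hx]
        exact le_rfl
    · intro y hy
      by_cases hyA2 : y ∈ s.A2
      · simp only [if_pos hyA2]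
        exact Nat.le_succ_of_le (inv.hA2h y hyA2)
      · simp only [if_neg hyA2]
        exact Nat.zero_le _

end Steps

section Steps2

variable {θ : Cardinal.{u}} {α : Ordinal.{u}}
variable {M N : Type u} [iM : L.Structure M] [iN : L.Structure N]
variable {s : GState L M N θ α} {a : Idx θ → Option M} {b : Idx θ → Option N}

set_option maxHeartbeats 1000000 in
lemma step_right (hθ : ℵ₀ ≤ θ) (inv : GInv s a b)
    (β' : Ordinal.{u}) (hβ : β' < s.β) (A' : Set N) (hsub : s.A2 ⊆ A') (hcard : #A' ≤ θ) :
    ∃ t : GState L M N θ α, Resp L M N s (.right β' hβ A' hsub hcard) t ∧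
      t.β < s.β ∧ ∃ a' b', GInv t a' b' := by
  classical
  set P : Set N := {y | y ∈ s.A2 ∧ ∀ i, b i ≠ some y} with hP
  have hPsub : P ⊆ s.A2 := fun y hy => hy.1
  have hPcard : #P ≤ #(Quotient.out θ) := by
    refine le_trans (Cardinal.mk_le_mk_of_subset hPsub) (le_trans s.card2 ?_)
    rw [Cardinal.mk_out]
  obtain ⟨e⟩ := (Cardinal.le_def _ _).1 hPcard
  set b' : Idx θ → Option N :=
    fun i => if h : ∃ p : P, ((e p, s.n) : Idx θ) = i then some (h.choose : N) else b i with hb'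
  have hF1 : Ext b b' := by
    intro i y hi
    simp only [hb']
    split
    · rename_i h
      exfalso
      have : b i = none := inv.hfresh' i (by rw [← h.choose_spec])
      rw [this] at hi; exact nomatch hi
    · exact hi
  have hF3 : ∀ i y, b' i = some y → y ∈ s.A2 := by
    intro i y hi
    simp only [hb'] at hi
    by_cases h : ∃ p : P, ((e p, s.n) : Idx θ) = i
    · rw [dif_pos h] at hi
      have : (h.choose : N) = y := Option.some_injective _ hi
      exact this ▸ hPsub h.choose.2
    · rw [dif_neg h] at hi
      exact inv.hranA2 i y hi
  have hF2 : ∀ y ∈ s.A2, ∃ i, b' i = some y := by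
    intro y hy
    by_cases hex : ∃ i, b i = some y
    · obtain ⟨i, hi⟩ := hex
      exact ⟨i, hF1 i y hi⟩
    · push_neg at hex
      have hyP : y ∈ P := ⟨hy, hex⟩
      refine ⟨(e ⟨y, hyP⟩, s.n), ?_⟩
      simp only [hb']
      have h : ∃ p : P, ((e p, s.n) : Idx θ) = ((e ⟨y, hyP⟩, s.n) : Idx θ) := ⟨⟨y, hyP⟩, rfl⟩
      rw [dif_pos h]
      have h1 : e h.choose = e ⟨y, hyP⟩ := (Prod.ext_iff.1 h.choose_spec).1
      have h2 : h.choose = ⟨y, hyP⟩ := e.injective h1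
      rw [h2]
  have hF4 : Inj b' := by
    intro i j y hi hj
    simp only [hb'] at hi hj
    by_cases h1 : ∃ p : P, ((e p, s.n) : Idx θ) = i
    · rw [dif_pos h1] at hi
      by_cases h2 : ∃ p : P, ((e p, s.n) : Idx θ) = j
      · rw [dif_pos h2] at hj
        have e1 : (h1.choose : N) = y := Option.some_injective _ hi
        have e2 : (h2.choose : N) = y := Option.some_injective _ hj
        have : h1.choose = h2.choose := Subtype.ext (e1.trans e2.symm)
        rw [← h1.choose_spec, ← h2.choose_spec, this]
      · rw [dif_neg h2] at hj
        exfalso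
        have e1 : (h1.choose : N) = y := Option.some_injective _ hi
        exact h1.choose.2.2 j (e1 ▸ hj)
    · rw [dif_neg h1] at hi
      by_cases h2 : ∃ p : P, ((e p, s.n) : Idx θ) = j
      · rw [dif_pos h2] at hj
        exfalso
        have e2 : (h2.choose : N) = y := Option.some_injective _ hj
        exact h2.choose.2.2 i (e2 ▸ hi)
      · rw [dif_neg h2] at hj
        exact inv.hb i j y hi hj
  have hF5 : ∀ p : Idx θ, s.n + 1 ≤ p.2 → b' p = none := by
    intro p hp
    simp only [hb']
    split
    · rename_i h
      exfalso
      have : s.n = p.2 := congrArg Prod.snd h.choose_spec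
      omega
    · exact inv.hfresh' p (by omega)
  obtain ⟨a', hexta, hR'⟩ := ((R_iff.1 inv.hR).2 β' hβ).2 b' hF1
  have hAE' : AtomEq (⟨M, iM⟩ : Struc L) ⟨N, iN⟩ a' b' := (R_iff.1 hR').1
  have hd' : ∀ i, (a' i).isSome ↔ (b' i).isSome := hAE'.1
  have ha'inj : Inj a' := inj_left_of_atomEq hAE' hF4
  have ha'fresh : ∀ p : Idx θ, s.n + 1 ≤ p.2 → a' p = none := by
    intro p hp
    have hbn : b' p = none := hF5 p hp
    rcases han : a' p with _ | x
    · rfl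
    · exfalso
      have : (b' p).isSome := (hd' p).1 (by rw [han]; rfl)
      rw [hbn] at this
      exact (Bool.false_ne_true this)
  set g' : M ≃. N := pe a' b' ha'inj hF4 with hg'
  have hcard1 : #(s.A1 ∪ {x : M | (g' x).isSome} : Set M) ≤ θ := by
    refine le_trans (Cardinal.mk_union_le _ _) ?_
    have hS : #({x : M | (g' x).isSome} : Set M) ≤ θ := by
      have hinj : Function.Injective
          (fun x : ({x : M | (g' x).isSome} : Set M) =>
            (((pe_isSome ha'inj hF4 hd').1 x.2).choose : Idx θ)) := by
        intro x1 x2 h12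
        dsimp only at h12
        have s1 := ((pe_isSome ha'inj hF4 hd').1 x1.2).choose_spec
        have s2 := ((pe_isSome ha'inj hF4 hd').1 x2.2).choose_spec
        rw [h12] at s1
        exact Subtype.ext (Option.some_injective _ (s1.symm.trans s2))
      refine le_trans (Cardinal.mk_le_of_injective hinj) ?_
      rw [mk_idx hθ]
    calc #(s.A1 : Set M) + #({x : M | (g' x).isSome} : Set M) ≤ θ + θ :=
          add_le_add s.card1 hS
      _ = θ := Cardinal.add_eq_self hθ
  refine ⟨⟨s.A1 ∪ {x : M | (g' x).isSome}, A', hcard1, hcard,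
    (fun x => if x ∈ s.A1 then s.h1 x else 0),
    (fun y => if y ∈ s.A2 then s.h2 y else if y ∈ A' then s.n + 1 else 0),
    g', ?_, ?_, ?_, β', le_of_lt (lt_of_lt_of_le hβ s.β_le),
    s.n + 1, ?_, ?_⟩, ⟨rfl, ?_, ?_, ?_, rfl, rfl, rfl, ?_, ?_⟩, hβ, a', b', ?_⟩
  · -- dom_sub
    intro x hx
    exact Or.inr hx
  · -- ran_sub
    intro y hy
    obtain ⟨i, hi⟩ := (pe_symm_isSome ha'inj hF4 hd').1 hy
    exact hsub (hF3 i y hi)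
  · -- pres
    exact pres_pe ha'inj hF4 hAE'
  · -- debt1
    intro x hx
    by_cases hxA1 : x ∈ s.A1
    · simp only [if_pos hxA1]
      exact Nat.lt_succ_of_le (inv.hA1h x hxA1)
    · simp only [if_neg hxA1]
      exact Nat.succ_pos _
  · -- debt2
    intro y hy
    obtain ⟨i, hi⟩ := (pe_symm_isSome ha'inj hF4 hd').1 hy
    have hyA2 : y ∈ s.A2 := hF3 i y hi
    simp only [if_pos hyA2]
    exact Nat.lt_succ_of_le (inv.hA2h y hyA2)
  · -- g extension
    intro x hx
    obtain ⟨y, hy⟩ := Option.isSome_iff_exists.1 hx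
    obtain ⟨i, hai, hbi⟩ := (inv.hg x y).1 hy
    show g' x = s.g x
    rw [hy]
    exact (pe_eq_some ha'inj hF4).2 ⟨i, hexta i x hai, hF1 i y hbi⟩
  · -- h1 preserved
    intro x hx
    simp only [if_pos hx]
  · -- h2 preserved
    intro y hy
    simp only [if_pos hy]
  · -- new elements have debt
    intro y hyA' hynot
    simp only [if_neg hynot, if_pos hyA']
    exact le_rfl
  · -- the domain condition (on the N side)
    intro y
    constructor
    · intro hy
      obtain ⟨i, hi⟩ := (pe_symm_isSome ha'inj hF4 hd').1 hy
      exact ⟨hF3 i y hi, Nat.lt_succ_of_le (inv.hA2h y (hF3 i y hi))⟩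
    · rintro ⟨hyA2, -⟩
      obtain ⟨i, hi⟩ := hF2 y hyA2
      exact (pe_symm_isSome ha'inj hF4 hd').2 ⟨i, hi⟩
  · -- the invariant
    refine ⟨hR', ha'inj, hF4, fun x y => pe_eq_some ha'inj hF4, ?_, ?_, ?_, ?_, ha'fresh⟩
    · intro i x hi
      exact Or.inr ((pe_isSome ha'inj hF4 hd').2 ⟨i, hi⟩)
    · intro i y hi
      exact hsub (hF3 i y hi)
    · intro x hx
      by_cases hxA1 : x ∈ s.A1
      · simp only [if_pos hxA1]
        exact Nat.le_succ_of_le (inv.hA1h x hxA1)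
      · simp only [if_neg hxA1]
        exact Nat.zero_le _
    · intro y hy
      by_cases hyA2 : y ∈ s.A2
      · simp only [if_pos hyA2]
        exact Nat.le_succ_of_le (inv.hA2h y hyA2)
      · simp only [if_neg hyA2, if_pos hy]
        exact le_rfl

end Steps2

section Main

variable {θ : Cardinal.{u}} {α : Ordinal.{u}}
variable {M N : Type u} [iM : L.Structure M] [iN : L.Structure N]

lemma isoWins_of_inv (hθ : ℵ₀ ≤ θ) :
    ∀ β : Ordinal.{u}, ∀ (s : GState L M N θ α) (a : Idx θ → Option M) (b : Idx θ → Option N),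
      s.β = β → GInv s a b → ISOWins L M N s := by
  intro β
  induction β using Ordinal.induction with
  | _ β IH =>
    intro s a b hβ inv
    have step : ∀ m : AISMove L M N s,
        ∃ t, Resp L M N s m t ∧ t.β < s.β ∧ ∃ a' b', GInv t a' b' := by
      intro m
      cases m with
      | left β' hβ' A' hsub hcard => exact step_left hθ inv β' hβ' A' hsub hcard
      | right β' hβ' A' hsub hcard => exact step_right hθ inv β' hβ' A' hsub hcard
    refine ISOWins.intro s (fun m => (step m).choose) (fun m => (step m).choose_spec.1) ?_
    intro m
    obtain ⟨hresp, hlt, a', b', inv'⟩ := (step m).choose_spec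
    exact IH _ (hβ ▸ hlt) _ a' b' rfl inv'

lemma isoWinsGame_of_R (hθ : ℵ₀ ≤ θ)
    (h : R α (⟨⟨M, iM⟩, fun _ => none⟩ : Pt L (Idx θ)) ⟨⟨N, iN⟩, fun _ => none⟩) :
    ISOWinsGame L M N θ α := by
  have hAE : AtomEq (⟨M, iM⟩ : Struc L) ⟨N, iN⟩ (fun _ => none) (fun _ => none) := (R_iff.1 h).1
  have hpres : PreservesAtomic L M N (⊥ : M ≃. N) := by
    intro k φ hφ v w hw
    cases k with
    | zero =>
        exact hAE.2 0 φ hφ (fun i => i.elim0) v w (fun i => i.elim0) (fun i => i.elim0)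
    | succ k =>
        exfalso
        have := hw 0
        rw [PEquiv.bot_apply] at this
        exact Option.not_mem_none _ this
  have hbotsymm : ∀ y : N, (⊥ : M ≃. N).symm y = none := fun y => rfl
  refine ⟨⟨∅, ∅, ?_, ?_, fun _ => 0, fun _ => 0, ⊥, ?_, ?_, hpres, α, le_rfl, 0, ?_, ?_⟩,
    rfl, rfl, rfl, rfl, rfl, ?_⟩
  · simp
  · simp
  · intro x hx
    rw [PEquiv.bot_apply] at hx
    exact absurd hx (by simp)
  · intro y hy
    rw [hbotsymm] at hy
    exact absurd hy (by simp)
  · intro x hx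
    rw [PEquiv.bot_apply] at hx
    exact absurd hx (by simp)
  · intro y hy
    rw [hbotsymm] at hy
    exact absurd hy (by simp)
  · refine isoWins_of_inv hθ α _ (fun _ => none) (fun _ => none) rfl ?_
    refine ⟨h, ?_, ?_, ?_, ?_, ?_, ?_, ?_, ?_⟩
    · intro i j x hi _
      exact absurd hi (by simp)
    · intro i j y hi _
      exact absurd hi (by simp)
    · intro x y
      constructor
      · intro hx
        rw [PEquiv.bot_apply] at hx
        exact absurd hx (by simp)
      · rintro ⟨i, hi, -⟩
        exact absurd hi (by simp)
    · intro i x hi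
      exact absurd hi (by simp)
    · intro i y hi
      exact absurd hi (by simp)
    · intro x hx
      exact absurd hx (by simp)
    · intro y hy
      exact absurd hy (by simp)
    · intro p _
      rfl

end Main

/-- For a vocabulary `τ` with `|τ| ≤ θ` and an ordinal `α`, the
equivalence closure `E¹_{θ,α}` of `E⁰_{θ,α}` is an equivalence relation on the class of
`τ`-structures with at most `ℶ_{α+1}(θ)` equivalence classes. -/
theorem e1_equivalence_and_classes (L : FirstOrder.Language.{u, u}) (θ : Cardinal.{u})
    (hθ : ℵ₀ ≤ θ) (hL : L.card ≤ θ) (α : Ordinal.{u}) :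
    Equivalence (E1 L θ α) ∧
      #(Quot (E1 L θ α)) ≤ Cardinal.lift.{u + 1} (bethAt θ (α + 1)) := by
  constructor
  · exact Relation.EqvGen.is_equivalence _
  · classical
    have hΛ : #(Idx θ) ≤ θ := le_of_eq (mk_idx hθ)
    set J : Quot (E1 L θ α) → Qt L (Idx θ) α :=
      fun c => Quot.mk _ (⟨c.out, fun _ => none⟩ : Pt L (Idx θ)) with hJdef
    have hJ : Function.Injective J := by
      intro c1 c2 h
      simp only [hJdef] at h
      have hRα : R α (⟨c1.out, fun _ => none⟩ : Pt L (Idx θ)) ⟨c2.out, fun _ => none⟩ :=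
        ((R.equivalence α).eqvGen_iff).1 (Quot.eq.1 h)
      have hE0 : E0 L θ α c1.out c2.out :=
        isoWinsGame_of_R (iM := c1.out.str) (iN := c2.out.str) hθ hRα
      have hmk : Quot.mk (E1 L θ α) c1.out = Quot.mk (E1 L θ α) c2.out :=
        Quot.sound (Relation.EqvGen.rel _ _ hE0)
      rw [Quot.out_eq, Quot.out_eq] at hmk
      exact hmk
    calc #(Quot (E1 L θ α)) ≤ #(Qt L (Idx θ) α) := Cardinal.mk_le_of_injective hJ
      _ ≤ Cardinal.lift.{u + 1} (bethAt θ (α + 1)) := mk_Qt_le hθ hL hΛ α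

end ShelahGame
end

section
/- If λ = λ^{ℵ₀} and λ ≥ 2^θ for an infinite cardinal θ ≤ λ, then there exists a family P ⊆ [λ]^{≤θ} with |P| ≤ λ such that every u ∈ [λ]^{≤θ} is contained in the union of countably many members of P, if and only if λ = λ^θ. -/
universe u

open Cardinal

/-- If `λ = λ^ℵ₀` and `λ ≥ 2^θ` for an infinite cardinal `θ ≤ λ`,
then there is a family `P ⊆ [λ]^{≤θ}` with `|P| ≤ λ` such that every `u ∈ [λ]^{≤θ}` is
contained in the union of countably many members of `P`, if and only if `λ = λ^θ`. -/
theorem exists_cover_iff_pow_eq (θ lam : Cardinal.{u}) (hθ : ℵ₀ ≤ θ) (hθlam : θ ≤ lam)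
    (hcount : lam ^ (ℵ₀ : Cardinal.{u}) = lam) (h2 : 2 ^ θ ≤ lam)
    (A : Type u) (hA : #A = lam) :
    (∃ P : Set (Set A), #P ≤ lam ∧
        (∀ B ∈ P, #B ≤ θ) ∧
        (∀ u : Set A, #u ≤ θ → ∃ Q ⊆ P, Q.Countable ∧ u ⊆ ⋃₀ Q)) ↔
      lam ^ θ = lam := by
  have hlaminf : ℵ₀ ≤ lam := hθ.trans hθlam
  have hθθlam : θ ^ θ ≤ lam := by
    calc θ ^ θ ≤ (2 ^ θ) ^ θ := power_le_power_right (le_of_lt (cantor θ))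
    _ = 2 ^ (θ * θ) := by rw [← power_mul]
    _ = 2 ^ θ := by rw [mul_eq_self hθ]
    _ ≤ lam := h2
  classical
  constructor
  · rintro ⟨P, hPcard, hPsmall, hPcover⟩
    refine le_antisymm ?_ (self_le_power lam (one_le_aleph0.trans hθ))
    set T := θ.out with hTdef
    have hT : #T = θ := mk_out θ
    -- injections from each B ∈ P into T
    have hι : ∀ p : ↥P, Nonempty (↥(p : Set A) ↪ T) := by
      intro p
      rw [← Cardinal.le_def, hT]
      exact hPsmall p p.2
    let ι : ∀ p : ↥P, ↥(p : Set A) ↪ T := fun p => (hι p).some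
    -- partial inverses
    let ρ : ↥P → T → Option A := fun p s =>
      if h : ∃ x : ↥(p : Set A), ι p x = s then some ↑(Classical.choose h) else none
    have hρ : ∀ (p : ↥P) (x : ↥(p : Set A)), ρ p (ι p x) = some ↑x := by
      intro p x
      have h : ∃ y : ↥(p : Set A), ι p y = ι p x := ⟨x, rfl⟩
      simp only [ρ, dif_pos h]
      exact congrArg _ (congrArg _ ((ι p).injective (Classical.choose_spec h)))
    have key : ∀ g : T → A, ∃ (f : ULift.{u} ℕ → Option ↥P) (k : T → ULift.{u} ℕ × T),
        ∀ t, ∃ p : ↥P, f (k t).1 = some p ∧ ρ p ((k t).2) = some (g t) := by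
      intro g
      obtain ⟨Q, hQP, hQc, hQu⟩ := hPcover (Set.range g) (by rw [← hT]; exact mk_range_le)
      have hS : (insert none ((fun p : ↥P => some p) '' (Subtype.val ⁻¹' Q)) :
          Set (Option ↥P)).Countable :=
        Set.Countable.insert none ((hQc.preimage Subtype.val_injective).image _)
      obtain ⟨f0, hf0⟩ := Set.Countable.exists_eq_range hS ⟨none, Set.mem_insert _ _⟩
      have ht : ∀ t, ∃ (n : ℕ) (s : T) (p : ↥P), f0 n = some p ∧ ρ p s = some (g t) := by
        intro t
        obtain ⟨B, hBQ, hgB⟩ := hQu ⟨t, rfl⟩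
        set p : ↥P := ⟨B, hQP hBQ⟩ with hpdef
        have hmem : some p ∈ insert none ((fun p : ↥P => some p) '' (Subtype.val ⁻¹' Q)) :=
          Set.mem_insert_of_mem _ ⟨p, hBQ, rfl⟩
        rw [hf0] at hmem
        obtain ⟨n, hn⟩ := hmem
        exact ⟨n, ι p ⟨g t, hgB⟩, p, hn, hρ p ⟨g t, hgB⟩⟩
      choose n s p hp hρp using ht
      exact ⟨fun m => f0 m.down, fun t => (⟨n t⟩, s t), fun t => ⟨p t, hp t, hρp t⟩⟩
    choose f k hk using key
    have hinj : Function.Injective (fun g : T → A => (f g, k g)) := by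
      intro g₁ g₂ hgg
      simp only [Prod.mk.injEq] at hgg
      funext t
      obtain ⟨p₁, hp₁, hr₁⟩ := hk g₁ t
      obtain ⟨p₂, hp₂, hr₂⟩ := hk g₂ t
      rw [hgg.1, hgg.2] at hp₁
      rw [hgg.2] at hr₁
      rw [hp₁] at hp₂
      have hpp : p₁ = p₂ := Option.some.inj hp₂
      rw [hpp, hr₂] at hr₁
      exact Option.some.inj hr₁.symm
    calc lam ^ θ = #(T → A) := by rw [← hA, ← hT]; exact power_def A T
      _ ≤ #((ULift.{u} ℕ → Option ↥P) × (T → ULift.{u} ℕ × T)) := mk_le_of_injective hinj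
      _ = #(ULift.{u} ℕ → Option ↥P) * #(T → ULift.{u} ℕ × T) := by
          rw [mk_prod, lift_id, lift_id]
      _ ≤ lam * lam := by
          refine mul_le_mul' ?_ ?_
          · calc #(ULift.{u} ℕ → Option ↥P) = #(Option ↥P) ^ (ℵ₀ : Cardinal.{u}) := by
                  rw [← power_def, mk_uLift, mk_nat, lift_aleph0]
              _ ≤ lam ^ (ℵ₀ : Cardinal.{u}) := by
                  refine power_le_power_right ?_
                  rw [mk_option]
                  calc #↥P + 1 ≤ lam + lam :=
                        add_le_add hPcard (one_le_aleph0.trans hlaminf)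
                    _ = lam := add_eq_self hlaminf
              _ = lam := hcount
          · calc #(T → ULift.{u} ℕ × T) = #(ULift.{u} ℕ × T) ^ θ := by
                  rw [← power_def, hT]
              _ ≤ θ ^ θ := by
                  refine power_le_power_right ?_
                  simp only [mk_prod, mk_uLift, mk_nat, lift_aleph0, lift_id, hT]
                  calc ℵ₀ * θ ≤ θ * θ := mul_le_mul' hθ le_rfl
                    _ = θ := mul_eq_self hθ
              _ ≤ lam := hθθlam
      _ = lam := mul_eq_self hlaminf
  · intro hpow
    refine ⟨{B : Set A | #B ≤ θ}, ?_, fun B hB => hB, fun u hu => ?_⟩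
    · have := mk_bounded_set_le A θ
      rwa [hA, max_eq_left hlaminf, hpow] at this
    · exact ⟨{u}, by simpa using hu, Set.countable_singleton u,
        by rw [Set.sUnion_singleton]⟩
end
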